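/- If (X,M) strongly divides (X',M') and (Y,N) strongly divides (Y',N'), then the wreath product (X,M) ≀ (Y,N) strongly divides (X',M') ≀ (Y',N'). -/

import Mathlib

/-- A transformation monoid `(X, M)`: a monoid `M` together with a right
action of `M` on the set `X` (the action is not required to be faithful). -/
structure TM where
  /-- the state set -/
  X : Type
  /-- the monoid -/
  M : Type
  [str : Monoid M]
  /-- the right action of `M` on `X` -/
  act : X → M → X
  act_one : ∀ x, act x 1 = x
  act_mul : ∀ x m n, act x (m * n) = act (act x m) n

attribute [instance] TM.str

/-- A transformation monoid is faithful if distinct monoid elements act as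
distinct transformations. -/
def TM.Faithful (T : TM) : Prop :=
  ∀ m m' : T.M, (∀ x, T.act x m = T.act x m') → m = m'

/-- The wreath product `(X,M) ≀ (Y,N)`: the monoid `M^Y ⋊ N` (with
multiplication `(f,n)(g,k) = (f + (n*g), nk)`, where `(f + (n*g))(y) =
f(y)·g(y·n)`) acting on `X × Y` by `(x,y)·(f,n) = (x·(yf), y·n)`. -/
def TM.wr (S T : TM) : TM where
  X := S.X × T.X
  M := (T.X → S.M) × T.M
  str :=
    { mul := fun p q => (fun y => p.1 y * q.1 (T.act y p.2), p.2 * q.2)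
      one := (fun _ => 1, 1)
      mul_assoc := by
        intro a b c
        refine Prod.ext ?_ (mul_assoc _ _ _)
        funext y
        show (a.1 y * b.1 (T.act y a.2)) * c.1 (T.act y (a.2 * b.2))
            = a.1 y * (b.1 (T.act y a.2) * c.1 (T.act (T.act y a.2) b.2))
        rw [T.act_mul, mul_assoc]
      one_mul := by
        intro a
        refine Prod.ext ?_ (one_mul _)
        funext y
        show 1 * a.1 (T.act y 1) = a.1 y
        rw [T.act_one, one_mul]
      mul_one := by
        intro a
        refine Prod.ext ?_ (mul_one _)
        funext y
        show a.1 y * 1 = a.1 y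
        exact mul_one _
      npow := @npowRec _ ⟨(fun _ => 1, 1)⟩
        ⟨fun p q => (fun y => p.1 y * q.1 (T.act y p.2), p.2 * q.2)⟩
      npow_zero := fun _ => rfl
      npow_succ := by intros; rfl }
  act := fun xy fn => (S.act xy.1 (fn.1 xy.2), T.act xy.2 fn.2)
  act_one := by
    intro x
    refine Prod.ext (S.act_one _) (T.act_one _)
  act_mul := by
    intro x m n
    refine Prod.ext ?_ (T.act_mul _ _ _)
    exact (S.act_mul _ _ _).trans rfl

/-- `(X,M)` strongly divides `(Y,N)` via the surjection `φ : Y → X`: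
there are a submonoid `N' ⊆ N` and a surjective homomorphism `ψ : N' → M`
with `φ(y·n) = φ(y)·ψ(n)`. -/
def TM.SDivVia (S T : TM) (φ : T.X → S.X) : Prop :=
  Function.Surjective φ ∧
  ∃ (N' : Submonoid T.M) (ψ : N' →* S.M),
    Function.Surjective ψ ∧
    ∀ (y : T.X) (n : N'), φ (T.act y (n : T.M)) = S.act (φ y) (ψ n)

/-- Strong division of transformation monoids. -/
def TM.SDiv (S T : TM) : Prop :=
  ∃ φ : T.X → S.X, TM.SDivVia S T φ

/-- If `(X,M)` strongly divides `(X',M')` and `(Y,N)`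
strongly divides `(Y',N')`, then `(X,M) ≀ (Y,N)` strongly divides
`(X',M') ≀ (Y',N')`. -/
theorem sdiv_wreath_mono (S S' T T' : TM)
    (h1 : TM.SDiv S S') (h2 : TM.SDiv T T') :
    TM.SDiv (S.wr T) (S'.wr T') := by
  obtain ⟨φ₁, hφ₁, M₁, ψ₁, hψ₁, hc₁⟩ := h1
  obtain ⟨φ₂, hφ₂, N₂, ψ₂, hψ₂, hc₂⟩ := h2
  have hσ : ∀ y, φ₂ (Function.surjInv hφ₂ y) = y := Function.surjInv_eq hφ₂
  set σ := Function.surjInv hφ₂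
  -- the "spec" predicate
  set Spec : (T'.X → S'.M) → (T.X → S.M) → Prop :=
    fun f g => ∀ y', ∃ h : f y' ∈ M₁, ψ₁ ⟨f y', h⟩ = g (φ₂ y') with hSpec
  have uniq : ∀ f g g', Spec f g → Spec f g' → g = g' := by
    intro f g g' hg hg'
    funext y
    obtain ⟨h, e⟩ := hg (σ y)
    obtain ⟨h', e'⟩ := hg' (σ y)
    rw [← hσ y, ← e, ← e']
  -- the submonoid
  set K : Submonoid (S'.wr T').M :=
    { carrier := {p | p.2 ∈ N₂ ∧ ∃ g : T.X → S.M, Spec p.1 g}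
      one_mem' := by
        refine ⟨N₂.one_mem, fun _ => 1, fun y' => ⟨M₁.one_mem, ?_⟩⟩
        show ψ₁ ⟨(1 : S'.M), _⟩ = 1
        exact map_one ψ₁
      mul_mem' := by
        rintro p q ⟨hp2, gp, hgp⟩ ⟨hq2, gq, hgq⟩
        refine ⟨N₂.mul_mem hp2 hq2,
          fun y => gp y * gq (T.act y (ψ₂ ⟨p.2, hp2⟩)), fun y' => ?_⟩
        obtain ⟨hp, ep⟩ := hgp y'
        obtain ⟨hq, eq'⟩ := hgq (T'.act y' p.2)
        refine ⟨M₁.mul_mem hp hq,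
          (map_mul ψ₁ ⟨p.1 y', hp⟩ ⟨q.1 (T'.act y' p.2), hq⟩).trans ?_⟩
        rw [ep, eq', hc₂ y' ⟨p.2, hp2⟩]
      } with hK
  have memK : ∀ p : K, (p : (S'.wr T').M).2 ∈ N₂ ∧
      ∃ g : T.X → S.M, Spec (p : (S'.wr T').M).1 g := fun p => p.2
  -- the homomorphism
  refine ⟨fun p => (φ₁ p.1, φ₂ p.2), fun ⟨x, y⟩ => ?_, K,
    { toFun := fun p => ((memK p).2.choose, ψ₂ ⟨(p : (S'.wr T').M).2, (memK p).1⟩)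
      map_one' := ?_
      map_mul' := ?_ }, ?_, ?_⟩
  · obtain ⟨x', hx⟩ := hφ₁ x
    obtain ⟨y', hy⟩ := hφ₂ y
    exact ⟨(x', y'), by simp [hx, hy]; rfl⟩
  · refine Prod.ext ?_ (map_one ψ₂)
    refine uniq _ _ _ (memK 1).2.choose_spec (fun y' => ⟨M₁.one_mem, ?_⟩)
    show ψ₁ ⟨(1 : S'.M), _⟩ = 1
    exact map_one ψ₁
  · intro p q
    refine Prod.ext ?_ (map_mul ψ₂ ⟨_, (memK p).1⟩ ⟨_, (memK q).1⟩)
    refine uniq _ _ _ (memK (p * q)).2.choose_spec (fun y' => ?_)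
    obtain ⟨hp, ep⟩ := (memK p).2.choose_spec y'
    obtain ⟨hq, eq'⟩ := (memK q).2.choose_spec (T'.act y' (p : (S'.wr T').M).2)
    refine ⟨M₁.mul_mem hp hq, (map_mul ψ₁ ⟨_, hp⟩ ⟨_, hq⟩).trans ?_⟩
    rw [ep, eq', hc₂ y' ⟨(p : (S'.wr T').M).2, (memK p).1⟩]
    rfl
  · -- surjectivity of Ψ
    rintro ⟨g, n⟩
    obtain ⟨⟨n', hn'⟩, hn⟩ := hψ₂ n
    have hτ : ∀ m, ψ₁ (Function.surjInv hψ₁ m) = m := Function.surjInv_eq hψ₁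
    set τ : S.M → M₁ := Function.surjInv hψ₁ with hτdef
    refine ⟨⟨((fun y' => (τ (g (φ₂ y')) : S'.M), n') : (S'.wr T').M),
      hn', g, fun y' => ⟨(τ (g (φ₂ y'))).2, ?_⟩⟩, ?_⟩
    · exact hτ _
    · refine Prod.ext ?_ hn
      refine uniq _ _ _ (memK _).2.choose_spec (fun y' => ⟨(τ (g (φ₂ y'))).2, hτ _⟩)
  · -- compatibility
    rintro ⟨x, y⟩ p
    obtain ⟨h, e⟩ := (memK p).2.choose_spec y
    show (φ₁ (S'.act x ((p : (S'.wr T').M).1 y)), φ₂ (T'.act y (p : (S'.wr T').M).2))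
      = (S.act (φ₁ x) ((memK p).2.choose (φ₂ y)),
         T.act (φ₂ y) (ψ₂ ⟨(p : (S'.wr T').M).2, (memK p).1⟩))
    rw [← e, ← hc₁ x ⟨_, h⟩, hc₂ y ⟨(p : (S'.wr T').M).2, (memK p).1⟩]
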